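/- arXiv:1512.01333 — 2 statements merged into one kernel-verified Lean document; each statement's English description precedes it below -/
import Mathlib

section
/- Let T be a rooted tree and T' a proper rooted subtree of T with the same root (i.e., V(T') ⊊ V(T) and T' is a subtree of T containing the root). Then τ(S(T'), x) > τ(S(T), x) for all x > 0, where S(·) denotes the subdivision tree rooted at the image of the root. -/
/-- A rooted tree: a root node together with a list of branches (rooted subtrees). -/
inductive RTree : Type
  | node : List RTree → RTree

namespace RTree

/-- Auxiliary fold: from the list of pairs `(M0 Tᵢ x, M Tᵢ x)` of the branches,
compute `(∏ᵢ M(Tᵢ,x), Σⱼ M0(Tⱼ,x) ∏_{i≠j} M(Tᵢ,x))`. -/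
def comb : List (ℝ × ℝ) → ℝ × ℝ
  | [] => (1, 0)
  | (m0, m) :: rest =>
    let pr := comb rest
    (m * pr.1, m0 * pr.1 + m * pr.2)

/-- `MM T x = (M₀(T,x), M₁(T,x))`: generating functions of matchings of `T`
not saturating / saturating the root. -/
def MM : RTree → ℝ → ℝ × ℝ
  | .node ts, x =>
    let pr := comb (ts.attach.map fun t =>
      let q := MM t.1 x
      (q.1, q.1 + q.2))
    (pr.1, x * pr.2)
  decreasing_by have := List.sizeOf_lt_of_mem t.2; simp only [RTree.node.sizeOf_spec]; omega

/-- Generating function of matchings not saturating the root. -/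
def M0 (t : RTree) (x : ℝ) : ℝ := (MM t x).1

/-- Generating function of matchings saturating the root. -/
def M1 (t : RTree) (x : ℝ) : ℝ := (MM t x).2

/-- The matching generating function `M(T,x) = M₀(T,x) + M₁(T,x)`. -/
def M (t : RTree) (x : ℝ) : ℝ := M0 t x + M1 t x

/-- `τ(T,x) = M₀(T,x)/M(T,x)`. -/
noncomputable def tau (t : RTree) (x : ℝ) : ℝ := M0 t x / M t x

/-- The subdivision tree: insert a new vertex in every edge. -/
def subdiv : RTree → RTree
  | .node ts => .node (ts.attach.map fun t => .node [subdiv t.1])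
  decreasing_by have := List.sizeOf_lt_of_mem t.2; simp only [RTree.node.sizeOf_spec]; omega

/-- Number of vertices. -/
def order : RTree → ℕ
  | .node ts => 1 + (ts.attach.map fun t => order t.1).sum
  decreasing_by have := List.sizeOf_lt_of_mem t.2; simp only [RTree.node.sizeOf_spec]; omega

end RTree

namespace RTree

/-- `IsSub T' T`: `T'` is a rooted subtree of `T` with the same root, i.e. the
branches of `T'` are rooted subtrees of a sublist of the branches of `T`. -/
inductive IsSub : RTree → RTree → Prop
  | node {ts' sub ts : List RTree} (hsub : sub.Sublist ts)
      (h : List.Forall₂ IsSub ts' sub) : IsSub (.node ts') (.node ts)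

end RTree

namespace RTree

/-- Structural strong induction for `RTree`. -/
theorem strongInd {P : RTree → Prop} (h : ∀ ts, (∀ t ∈ ts, P t) → P (.node ts)) :
    ∀ t, P t := by
  have key : ∀ n t, sizeOf t ≤ n → P t := by
    intro n
    induction n with
    | zero =>
      intro t ht
      cases t with
      | node ts => simp only [RTree.node.sizeOf_spec] at ht; omega
    | succ n ih =>
      intro t ht
      cases t with
      | node ts =>
        refine h ts fun s hs => ih s ?_
        have := List.sizeOf_lt_of_mem hs
        simp only [RTree.node.sizeOf_spec] at ht
        omega
  exact fun t => key (sizeOf t) t le_rfl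

theorem MM_node (ts : List RTree) (x : ℝ) :
    MM (.node ts) x =
      ((comb (ts.map fun t => ((MM t x).1, (MM t x).1 + (MM t x).2))).1,
       x * (comb (ts.map fun t => ((MM t x).1, (MM t x).1 + (MM t x).2))).2) := by
  rw [MM]
  rw [List.attach_map_val (l := ts) (f := fun t => ((MM t x).1, (MM t x).1 + (MM t x).2))]

theorem M0_node (ts : List RTree) (x : ℝ) :
    M0 (.node ts) x = (comb (ts.map fun t => (M0 t x, M t x))).1 := by
  show (MM (.node ts) x).1 = _
  rw [MM_node]
  rfl

theorem M1_node (ts : List RTree) (x : ℝ) :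
    M1 (.node ts) x = x * (comb (ts.map fun t => (M0 t x, M t x))).2 := by
  show (MM (.node ts) x).2 = _
  rw [MM_node]
  rfl

theorem subdiv_node (ts : List RTree) :
    subdiv (.node ts) = .node (ts.map fun t => .node [subdiv t]) := by
  rw [subdiv]
  rw [List.attach_map_val (l := ts) (f := fun t => RTree.node [subdiv t])]

theorem order_node (ts : List RTree) :
    order (.node ts) = 1 + (ts.map order).sum := by
  rw [order]
  rw [List.attach_map_val (l := ts) (f := order)]

theorem comb_pos (l : List (ℝ × ℝ)) (h : ∀ p ∈ l, 0 < p.1 ∧ p.1 ≤ p.2) :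
    0 < (comb l).1 ∧ 0 ≤ (comb l).2 := by
  induction l with
  | nil => simp [comb]
  | cons p rest ih =>
    obtain ⟨m0, m⟩ := p
    obtain ⟨h1, h2⟩ := h (m0, m) (List.mem_cons_self)
    obtain ⟨ih1, ih2⟩ := ih (fun q hq => h q (List.mem_cons_of_mem _ hq))
    simp only [comb]
    constructor
    · exact mul_pos (lt_of_lt_of_le h1 h2) ih1
    · have : 0 ≤ m0 * (comb rest).1 := le_of_lt (mul_pos h1 ih1)
      have : 0 ≤ m * (comb rest).2 := mul_nonneg (le_of_lt (lt_of_lt_of_le h1 h2)) ih2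
      linarith

theorem comb_snd (l : List (ℝ × ℝ)) (h : ∀ p ∈ l, p.2 ≠ 0) :
    (comb l).2 = (comb l).1 * (l.map fun p => p.1 / p.2).sum := by
  induction l with
  | nil => simp [comb]
  | cons p rest ih =>
    obtain ⟨m0, m⟩ := p
    have hm : m ≠ 0 := h (m0, m) (List.mem_cons_self)
    have ihr := ih (fun q hq => h q (List.mem_cons_of_mem _ hq))
    simp only [comb, List.map_cons, List.sum_cons]
    rw [ihr]
    field_simp

theorem MM_pos (x : ℝ) (hx : 0 < x) : ∀ t, 0 < M0 t x ∧ 0 ≤ M1 t x := by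
  refine strongInd ?_
  intro ts ih
  have hl : ∀ p ∈ ts.map (fun t => (M0 t x, M t x)), 0 < p.1 ∧ p.1 ≤ p.2 := by
    intro p hp
    rw [List.mem_map] at hp
    obtain ⟨t, ht, rfl⟩ := hp
    obtain ⟨h1, h2⟩ := ih t ht
    refine ⟨h1, ?_⟩
    show M0 t x ≤ M t x
    unfold M; linarith
  obtain ⟨hc1, hc2⟩ := comb_pos _ hl
  rw [M0_node, M1_node]
  exact ⟨hc1, mul_nonneg hx.le hc2⟩

theorem M_pos (x : ℝ) (hx : 0 < x) (t : RTree) : 0 < M t x := by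
  obtain ⟨h1, h2⟩ := MM_pos x hx t
  unfold M; linarith

theorem tau_pos (x : ℝ) (hx : 0 < x) (t : RTree) : 0 < tau t x :=
  div_pos (MM_pos x hx t).1 (M_pos x hx t)

theorem tau_node (x : ℝ) (hx : 0 < x) (ts : List RTree) :
    tau (.node ts) x = 1 / (1 + x * (ts.map fun t => tau t x).sum) := by
  have hl2 : ∀ p ∈ ts.map (fun t => (M0 t x, M t x)), p.2 ≠ 0 := by
    intro p hp
    rw [List.mem_map] at hp
    obtain ⟨t, ht, rfl⟩ := hp
    exact (M_pos x hx t).ne'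
  have hl : ∀ p ∈ ts.map (fun t => (M0 t x, M t x)), 0 < p.1 ∧ p.1 ≤ p.2 := by
    intro p hp
    rw [List.mem_map] at hp
    obtain ⟨t, ht, rfl⟩ := hp
    obtain ⟨h1, h2⟩ := MM_pos x hx t
    refine ⟨h1, ?_⟩
    show M0 t x ≤ M t x
    unfold M; linarith
  have hC1 : 0 < (comb (ts.map fun t => (M0 t x, M t x))).1 := (comb_pos _ hl).1
  have hsnd := comb_snd _ hl2
  have hmap : ((ts.map fun t => (M0 t x, M t x)).map fun p => p.1 / p.2)
      = ts.map fun t => tau t x := by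
    rw [List.map_map]; rfl
  unfold tau M
  rw [M0_node, M1_node, hsnd, hmap]
  set C := (comb (ts.map fun t => (M0 t x, M t x))).1 with hC
  set S := (ts.map fun t => tau t x).sum with hS
  have h1 : C + x * (C * S) = C * (1 + x * S) := by ring
  calc C / (C + x * (C * S)) = (C * 1) / (C * (1 + x * S)) := by rw [h1, mul_one]
    _ = 1 / (1 + x * S) := mul_div_mul_left _ _ hC1.ne'

theorem tau_single (x : ℝ) (hx : 0 < x) (s : RTree) :
    tau (.node [s]) x = 1 / (1 + x * tau s x) := by
  rw [tau_node x hx]; simp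

theorem tau_sub_node (x : ℝ) (hx : 0 < x) (ts : List RTree) :
    tau (subdiv (.node ts)) x
      = 1 / (1 + x * (ts.map fun t => tau (.node [subdiv t]) x).sum) := by
  rw [subdiv_node, tau_node x hx, List.map_map]
  rfl

theorem sum_le_of_sublist {M : Type*} [AddCommMonoid M] [PartialOrder M] [IsOrderedAddMonoid M] {l₁ l₂ : List M}
    (h : l₁.Sublist l₂) : (∀ a ∈ l₂, 0 ≤ a) → l₁.sum ≤ l₂.sum := by
  induction h with
  | slnil => simp
  | cons a hsub ih =>
    intro h0
    have h1 := ih (fun b hb => h0 b (List.mem_cons_of_mem _ hb))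
    have ha := h0 a (List.mem_cons_self)
    simp only [List.sum_cons]
    calc _ ≤ _ := h1
      _ ≤ a + _ := le_add_of_nonneg_left ha
  | cons_cons a hsub ih =>
    intro h0
    have h1 := ih (fun b hb => h0 b (List.mem_cons_of_mem _ hb))
    simp only [List.sum_cons]
    exact add_le_add_right h1 a

theorem sum_lt_of_sublist {l₁ l₂ : List ℝ} (h : l₁.Sublist l₂) :
    l₁.length < l₂.length → (∀ a ∈ l₂, 0 < a) → l₁.sum < l₂.sum := by
  induction h with
  | slnil => intro h; simp at h
  | cons a hsub ih =>
    intro _ h0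
    have hle := sum_le_of_sublist hsub (fun b hb => (h0 b (List.mem_cons_of_mem _ hb)).le)
    have ha := h0 a (List.mem_cons_self)
    simp only [List.sum_cons]
    linarith
  | cons_cons a hsub ih =>
    intro hlen h0
    simp only [List.length_cons] at hlen
    have := ih (by omega) (fun b hb => h0 b (List.mem_cons_of_mem _ hb))
    simp only [List.sum_cons]
    linarith

theorem order_le_of_isSub : ∀ T, ∀ T', IsSub T' T → order T' ≤ order T := by
  refine strongInd ?_
  intro ts ih T' hsub
  cases hsub with
  | @node ts' sub _ hss hf =>
    rw [order_node, order_node]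
    have h1 : (ts'.map order).sum ≤ (sub.map order).sum := by
      have key : ∀ l₁ l₂, List.Forall₂ IsSub l₁ l₂ → (∀ b ∈ l₂, b ∈ ts) →
          (l₁.map order).sum ≤ (l₂.map order).sum := by
        intro l₁ l₂ hf2
        induction hf2 with
        | nil => simp
        | @cons a b t₁ t₂ hab htl ihtl =>
          intro hmem
          have h1 := ih b (hmem b (List.mem_cons_self)) a hab
          have h2 := ihtl (fun c hc => hmem c (List.mem_cons_of_mem _ hc))
          simp only [List.map_cons, List.sum_cons]
          omega
      exact key _ _ hf (fun b hb => hss.subset hb)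
    have h2 : (sub.map order).sum ≤ (ts.map order).sum :=
      sum_le_of_sublist (hss.map order) (by intro a ha; exact Nat.zero_le a)
    omega

theorem forall2_order_sum_le {l₁ l₂ : List RTree} (h : List.Forall₂ IsSub l₁ l₂) :
    (l₁.map order).sum ≤ (l₂.map order).sum := by
  induction h with
  | nil => simp
  | @cons a b t₁ t₂ hab htl ih =>
    have := order_le_of_isSub b a hab
    simp only [List.map_cons, List.sum_cons]
    omega

theorem tau_sum_nonneg (x : ℝ) (hx : 0 < x) (l : List RTree) :
    0 ≤ (l.map fun t => tau (.node [subdiv t]) x).sum := by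
  apply List.sum_nonneg
  intro a ha
  rw [List.mem_map] at ha
  obtain ⟨t, _, rfl⟩ := ha
  exact (tau_pos x hx _).le

theorem main_ineq (x : ℝ) (hx : 0 < x) :
    ∀ T T', IsSub T' T →
      tau (subdiv T) x ≤ tau (subdiv T') x ∧
      (order T' < order T → tau (subdiv T) x < tau (subdiv T') x) := by
  refine strongInd ?_
  intro ts ih T' hsub
  cases hsub with
  | @node ts' sub _ hss hf =>
    set g : RTree → ℝ := fun t => tau (.node [subdiv t]) x with hg
    have gpos : ∀ t, 0 < g t := fun t => tau_pos x hx _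
    have claims : ∀ l₁ l₂, List.Forall₂ IsSub l₁ l₂ → (∀ b ∈ l₂, b ∈ ts) →
        (l₁.map g).sum ≤ (l₂.map g).sum ∧
        ((l₁.map order).sum < (l₂.map order).sum → (l₁.map g).sum < (l₂.map g).sum) := by
      intro l₁ l₂ hf2
      induction hf2 with
      | nil => simp
      | @cons a b t₁ t₂ hab htl ihtl =>
        intro hmem
        have hb : b ∈ ts := hmem b (List.mem_cons_self)
        have ihab := ih b hb a hab
        have hpa : 0 < 1 + x * tau (subdiv a) x := by
          have := tau_pos x hx (subdiv a); nlinarith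
        have hpb : 0 < 1 + x * tau (subdiv b) x := by
          have := tau_pos x hx (subdiv b); nlinarith
        have hgab : g a ≤ g b := by
          rw [hg]; dsimp only
          rw [tau_single x hx, tau_single x hx]
          apply one_div_le_one_div_of_le hpb
          nlinarith [ihab.1]
        have hgab' : order a < order b → g a < g b := by
          intro ho
          rw [hg]; dsimp only
          rw [tau_single x hx, tau_single x hx]
          apply one_div_lt_one_div_of_lt hpb
          nlinarith [ihab.2 ho]
        have ihtl' := ihtl (fun c hc => hmem c (List.mem_cons_of_mem _ hc))
        have hordab : order a ≤ order b := order_le_of_isSub b a hab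
        have hordtl := forall2_order_sum_le htl
        constructor
        · simp only [List.map_cons, List.sum_cons]
          linarith [ihtl'.1]
        · intro hlt
          simp only [List.map_cons, List.sum_cons] at hlt ⊢
          by_cases hc : order a < order b
          · linarith [hgab' hc, ihtl'.1]
          · have htail : (t₁.map order).sum < (t₂.map order).sum := by omega
            linarith [ihtl'.2 htail, hgab]
    have hA := claims ts' sub hf (fun b hb => hss.subset hb)
    have hBC : (sub.map g).sum ≤ (ts.map g).sum := by
      apply sum_le_of_sublist (hss.map g)
      intro a ha
      rw [List.mem_map] at ha
      obtain ⟨t, _, rfl⟩ := ha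
      exact (gpos t).le
    have hA0 : 0 ≤ (ts'.map g).sum := tau_sum_nonneg x hx ts'
    have hposA : 0 < 1 + x * (ts'.map g).sum := by nlinarith
    rw [tau_sub_node x hx, tau_sub_node x hx]
    constructor
    · apply one_div_le_one_div_of_le hposA
      have : (ts'.map g).sum ≤ (ts.map g).sum := le_trans hA.1 hBC
      nlinarith
    · intro hproper
      rw [order_node, order_node] at hproper
      have hsubord : (sub.map order).sum ≤ (ts.map order).sum :=
        sum_le_of_sublist (hss.map order) (by intro a _; exact Nat.zero_le a)
      have htsord : (ts'.map order).sum ≤ (sub.map order).sum := forall2_order_sum_le hf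
      have hAC : (ts'.map g).sum < (ts.map g).sum := by
        by_cases hcase : (ts'.map order).sum < (sub.map order).sum
        · exact lt_of_lt_of_le (hA.2 hcase) hBC
        · have h2 : (sub.map order).sum < (ts.map order).sum := by omega
          have hne : sub ≠ ts := by rintro rfl; omega
          have hlen : sub.length < ts.length :=
            lt_of_le_of_ne hss.length_le (fun h => hne (hss.eq_of_length h))
          have hlt : (sub.map g).sum < (ts.map g).sum := by
            apply sum_lt_of_sublist (hss.map g) (by simpa using hlen)
            intro a ha
            rw [List.mem_map] at ha
            obtain ⟨t, _, rfl⟩ := ha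
            exact gpos t
          exact lt_of_le_of_lt hA.1 hlt
      apply one_div_lt_one_div_of_lt hposA
      nlinarith

end RTree

open RTree in
/-- Lemma 2.4: if `T'` is a proper rooted subtree of `T` with the same root,
then `τ(S(T'),x) > τ(S(T),x)` for all `x > 0`. -/
theorem tau_subdiv_lt_of_proper_subtree (T T' : RTree) (hsub : IsSub T' T)
    (hproper : T'.order < T.order) (x : ℝ) (hx : 0 < x) :
    tau (subdiv T) x < tau (subdiv T') x := by
  exact (main_ineq x hx T T' hsub).2 hproper
end

section
/- For any tree T of order n, the incidence energy equals the Laplacian-energy-like invariant and half the adjacency energy of its subdivision tree: IE(T) = LEL(T) = (1/2)·E(S(T)). -/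
open scoped Classical

variable {V : Type*}

/-- Degree of a vertex. -/
noncomputable def vdeg (G : SimpleGraph V) (v : V) : ℕ := (G.neighborSet v).ncard

/-- The subdivision graph `S(G)`: insert a new vertex in every edge of `G`.
Its vertices are the vertices of `G` together with the edges of `G`, and a vertex
`v` is adjacent to an edge `e` iff `v` is an endpoint of `e` in `G`. -/
def subdivision (G : SimpleGraph V) : SimpleGraph (V ⊕ G.edgeSet) where
  Adj a b :=
    (∃ v e, a = Sum.inl v ∧ b = Sum.inr e ∧ v ∈ (e : Sym2 V)) ∨
      (∃ v e, b = Sum.inl v ∧ a = Sum.inr e ∧ v ∈ (e : Sym2 V))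
  symm := ⟨fun a b h => Or.symm h⟩
  loopless := ⟨fun a => by rintro (⟨v, e, rfl, h, -⟩ | ⟨v, e, rfl, h, -⟩) <;> simp at h⟩

/-- A set of edges of `G` forms a matching: pairwise disjoint edges. -/
def IsMatchingSet (G : SimpleGraph V) (s : Set (Sym2 V)) : Prop :=
  s ⊆ G.edgeSet ∧ s.Pairwise fun e f => ∀ v, v ∈ e → v ∉ f

/-- `matchCount G k` is the number `m(G,k)` of `k`-edge matchings of `G`. -/
noncomputable def matchCount (G : SimpleGraph V) (k : ℕ) : ℕ :=
  {s : Set (Sym2 V) | IsMatchingSet G s ∧ s.ncard = k}.ncard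

/-- The matching generating function `M(G,x) = Σ_k m(G,k) x^k`. -/
noncomputable def matchGen (G : SimpleGraph V) [Fintype V] (x : ℝ) : ℝ :=
  ∑ k ∈ Finset.range (Fintype.card V + 1), (matchCount G k : ℝ) * x ^ k

/-- The Laplacian matrix `D(G) - A(G)` (over ℝ). -/
noncomputable def lapM (G : SimpleGraph V) [Fintype V] : Matrix V V ℝ :=
  Matrix.of fun i j =>
    if i = j then (vdeg G i : ℝ) else if G.Adj i j then -1 else 0

/-- The adjacency matrix (over ℝ). -/
noncomputable def adjM (G : SimpleGraph V) [Fintype V] : Matrix V V ℝ :=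
  Matrix.of fun i j => if G.Adj i j then 1 else 0

/-- The signless Laplacian matrix `D(G) + A(G)` (over ℝ). -/
noncomputable def signlessLapM (G : SimpleGraph V) [Fintype V] : Matrix V V ℝ :=
  Matrix.of fun i j =>
    if i = j then (vdeg G i : ℝ) else if G.Adj i j then 1 else 0

lemma adjM_isHermitian (G : SimpleGraph V) [Fintype V] :
    (adjM G).IsHermitian := by
  unfold Matrix.IsHermitian
  ext i j
  simp only [Matrix.conjTranspose_apply, adjM, Matrix.of_apply, star_trivial]
  rw [SimpleGraph.adj_comm]

lemma lapM_isHermitian (G : SimpleGraph V) [Fintype V] :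
    (lapM G).IsHermitian := by
  unfold Matrix.IsHermitian
  ext i j
  simp only [Matrix.conjTranspose_apply, lapM, Matrix.of_apply, star_trivial]
  by_cases h : i = j
  · subst h; rfl
  · simp only [h, Ne.symm h, if_false]
    rw [SimpleGraph.adj_comm]

lemma signlessLapM_isHermitian (G : SimpleGraph V) [Fintype V] :
    (signlessLapM G).IsHermitian := by
  unfold Matrix.IsHermitian
  ext i j
  simp only [Matrix.conjTranspose_apply, signlessLapM, Matrix.of_apply, star_trivial]
  by_cases h : i = j
  · subst h; rfl
  · simp only [h, Ne.symm h, if_false]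
    rw [SimpleGraph.adj_comm]

/-- The `k`-th Laplacian coefficient `c_k(G)`:
`det(λI - L(G)) = Σ_k (-1)^k c_k(G) λ^{n-k}`. -/
noncomputable def lapCoeff (G : SimpleGraph V) [Fintype V] (k : ℕ) : ℝ :=
  (-1) ^ k * (lapM G).charpoly.coeff (Fintype.card V - k)

/-- The Laplacian coefficient generating function `φ(G,x) = Σ_{k=0}^{n-1} c_k(G) x^k`. -/
noncomputable def lapGen (G : SimpleGraph V) [Fintype V] (x : ℝ) : ℝ :=
  ∑ k ∈ Finset.range (Fintype.card V), lapCoeff G k * x ^ k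

/-- The graph energy: sum of the absolute values of the adjacency eigenvalues. -/
noncomputable def energy (G : SimpleGraph V) [Fintype V] : ℝ :=
  ∑ i, |(adjM_isHermitian G).eigenvalues i|

/-- The Laplacian-energy-like invariant: sum of the square roots of the
Laplacian eigenvalues. -/
noncomputable def LEL (G : SimpleGraph V) [Fintype V] : ℝ :=
  ∑ i, Real.sqrt ((lapM_isHermitian G).eigenvalues i)

/-- The incidence energy: sum of the singular values of the incidence matrix,
i.e. the sum of the square roots of the signless Laplacian eigenvalues. -/
noncomputable def IE (G : SimpleGraph V) [Fintype V] : ℝ :=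
  ∑ i, Real.sqrt ((signlessLapM_isHermitian G).eigenvalues i)

/-- Hosoya index `Z(G) = Σ_k m(G,k)`. -/
noncomputable def hosoya (G : SimpleGraph V) [Fintype V] : ℕ :=
  ∑ k ∈ Finset.range (Fintype.card V + 1), matchCount G k

/-- The children of `v` in the tree `T` rooted at `v₀`. -/
def rchildren (T : SimpleGraph V) (v₀ v : V) : Set V :=
  {u | T.Adj v u ∧ T.dist v₀ u = T.dist v₀ v + 1}

/-- In the tree `T` rooted at `v₀`, the subtree hanging at `u` is a complete
`d`-ary tree: for some height `h`, every descendant of `u` at distance `< h`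
from `u` has exactly `d` children and every other descendant has none. -/
def IsCompleteAry (T : SimpleGraph V) (v₀ : V) (d : ℕ) (u : V) : Prop :=
  ∃ h : ℕ, ∀ w, T.dist v₀ w = T.dist v₀ u + T.dist u w →
    (rchildren T v₀ w).ncard = if T.dist u w < h then d else 0

/-- `T` is the greedy tree with maximum degree `Δ` (Definition 1.2, with
`Δ = d+1`): `T` is a tree having a root `v₀` of degree `Δ` such that the heights
of any two pendent vertices differ by at most one, and for every vertex at most
one child-subtree fails to be a complete `(Δ-1)`-ary tree. -/
def IsGreedyTree (Δ : ℕ) (T : SimpleGraph V) : Prop :=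
  T.IsTree ∧ ∃ v₀ : V,
    vdeg T v₀ = Δ ∧
    (∀ u w : V, vdeg T u = 1 → vdeg T w = 1 → T.dist v₀ u ≤ T.dist v₀ w + 1) ∧
    ∀ v : V, {u | u ∈ rchildren T v₀ v ∧ ¬ IsCompleteAry T v₀ (Δ - 1) u}.Subsingleton

open Polynomial Matrix


lemma charpoly_conj {n : Type*} [Fintype n] [DecidableEq n] {R : Type*} [CommRing R]
    (P Q M : Matrix n n R) (h1 : P * Q = 1) (h2 : Q * P = 1) :
    (P * M * Q).charpoly = M.charpoly := by
  have key : charmatrix (P * M * Q) =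
      (C : R →+* R[X]).mapMatrix P * charmatrix M * (C : R →+* R[X]).mapMatrix Q := by
    unfold charmatrix
    rw [Matrix.mul_sub, Matrix.sub_mul]
    congr 1
    · have hc := (Matrix.scalar_commute (X : R[X]) (fun r' => Commute.all _ _)
        ((C : R →+* R[X]).mapMatrix P)).eq
      rw [← hc, Matrix.mul_assoc, ← _root_.map_mul ((C : R →+* R[X]).mapMatrix), h1,
        _root_.map_one, Matrix.mul_one]
    · rw [← _root_.map_mul ((C : R →+* R[X]).mapMatrix),
        ← _root_.map_mul ((C : R →+* R[X]).mapMatrix)]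
  unfold Matrix.charpoly
  rw [key, det_mul, det_mul, mul_comm, ← mul_assoc, ← det_mul,
    ← _root_.map_mul ((C : R →+* R[X]).mapMatrix), h2, _root_.map_one, det_one, one_mul]

lemma charpoly_diag {n : Type*} [Fintype n] [DecidableEq n] {R : Type*} [CommRing R] (d : n → R) :
    (Matrix.diagonal d).charpoly = ∏ i, (X - C (d i)) := by
  have : charmatrix (Matrix.diagonal d) = Matrix.diagonal (fun i => X - C (d i)) := by
    ext i j
    by_cases h : i = j
    · subst h; simp [charmatrix_apply]
    · simp [charmatrix_apply_ne _ _ _ h, Matrix.diagonal_apply_ne _ h, diagonal_apply_ne _ h]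
  rw [Matrix.charpoly, this, det_diagonal]

lemma charpoly_hermitian {n : Type*} [Fintype n] [DecidableEq n] (A : Matrix n n ℝ)
    (hA : A.IsHermitian) : A.charpoly = ∏ i, (X - C (hA.eigenvalues i)) := by
  have hspec := hA.spectral_theorem
  set U := (Matrix.IsHermitian.eigenvectorUnitary hA : Matrix n n ℝ)
  have h1 : U * star U = 1 := (Matrix.mem_unitaryGroup_iff).mp (hA.eigenvectorUnitary).2
  have h2 : star U * U = 1 := (Matrix.mem_unitaryGroup_iff').mp (hA.eigenvectorUnitary).2
  have heq : A.charpoly = (Matrix.diagonal ((RCLike.ofReal : ℝ → ℝ) ∘ hA.eigenvalues)).charpoly := by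
    conv_lhs => rw [hspec]
    exact charpoly_conj U (star U) _ h1 h2
  rw [heq]
  have hfun : (RCLike.ofReal : ℝ → ℝ) ∘ hA.eigenvalues = hA.eigenvalues := by
    ext i; simp
  rw [hfun, charpoly_diag]

lemma sum_eigen {n : Type*} [Fintype n] [DecidableEq n] (A : Matrix n n ℝ)
    (hA : A.IsHermitian) (f : ℝ → ℝ) :
    ∑ i, f (hA.eigenvalues i) = (A.charpoly.roots.map f).sum := by
  rw [charpoly_hermitian A hA]
  have : (∏ i, (X - C (hA.eigenvalues i))).roots = Finset.univ.val.map hA.eigenvalues := by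
    rw [← Polynomial.roots_multiset_prod_X_sub_C (Finset.univ.val.map hA.eigenvalues)]
    congr 1
    rw [Multiset.map_map]
    rfl
  rw [this, Multiset.map_map]
  rfl

lemma tree_adj_dist_succ {V : Type*} {T : SimpleGraph V} (hT : T.IsTree) (v₀ : V) {u v : V}
    (h : T.Adj u v) :
    T.dist v₀ v = T.dist v₀ u + 1 ∨ T.dist v₀ u = T.dist v₀ v + 1 := by
  have hconn := hT.isConnected
  have hne : T.dist v₀ u ≠ T.dist v₀ v := by
    intro heq
    -- get a path from v₀ to u of length dist
    obtain ⟨p, hp, hlen⟩ := (hconn.exists_path_of_dist v₀ u)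
    have hvns : v ∉ p.support := by
      intro hv
      have hsplit := congr_arg SimpleGraph.Walk.length (p.take_spec hv)
      rw [SimpleGraph.Walk.length_append] at hsplit
      have hdrop : (p.dropUntil v hv).length ≠ 0 := by
        intro h0
        exact h.ne' (SimpleGraph.Walk.eq_of_length_eq_zero h0)
      have htake : (p.takeUntil v hv).length < p.length := by omega
      have := T.dist_le (p.takeUntil v hv)
      omega
    -- p.concat h is a path from v₀ to v of length dist+1
    have hcp : (p.concat h).IsPath := by
      rw [← SimpleGraph.Walk.isPath_reverse_iff, SimpleGraph.Walk.reverse_concat]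
      rw [SimpleGraph.Walk.cons_isPath_iff, SimpleGraph.Walk.isPath_reverse_iff,
        SimpleGraph.Walk.support_reverse]
      exact ⟨hp, fun hc => hvns (List.mem_reverse.mp hc)⟩
    obtain ⟨q, hq, hqlen⟩ := (hconn.exists_path_of_dist v₀ v)
    have := hT.IsAcyclic.path_unique ⟨p.concat h, hcp⟩ ⟨q, hq⟩
    have hl : (p.concat h).length = q.length := by rw [congr_arg (·.val.length) this]
    rw [SimpleGraph.Walk.length_concat] at hl
    omega
  have h1 : T.dist v₀ v ≤ T.dist v₀ u + 1 := by
    have := hconn.dist_triangle (u := v₀) (v := u) (w := v)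
    rwa [(SimpleGraph.dist_eq_one_iff_adj).mpr h] at this
  have h2 : T.dist v₀ u ≤ T.dist v₀ v + 1 := by
    have := hconn.dist_triangle (u := v₀) (v := v) (w := u)
    rwa [(SimpleGraph.dist_eq_one_iff_adj).mpr h.symm] at this
  omega


section Inc
variable [Fintype V] (T : SimpleGraph V)

/-- incidence matrix -/
noncomputable def incM : Matrix V T.edgeSet ℝ :=
  Matrix.of fun v e => if v ∈ (e : Sym2 V) then 1 else 0

lemma vdeg_eq_card (v : V) :
    (vdeg T v : ℝ) = ∑ e : T.edgeSet, (if v ∈ (e : Sym2 V) then (1:ℝ) else 0) := by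
  rw [Finset.sum_boole]
  norm_cast
  have : (Finset.univ.filter fun e : T.edgeSet => v ∈ (e : Sym2 V)).card
      = Fintype.card {e : T.edgeSet // v ∈ (e : Sym2 V)} := by
    rw [Fintype.card_subtype]
  rw [vdeg, this]
  have he : {e : T.edgeSet // v ∈ (e : Sym2 V)} ≃ T.incidenceSet v :=
    { toFun := fun x => ⟨x.1.1, x.1.2, x.2⟩
      invFun := fun x => ⟨⟨x.1, x.2.1⟩, x.2.2⟩
      left_inv := fun x => rfl
      right_inv := fun x => rfl }
  rw [Fintype.card_congr he, Fintype.card_congr (T.incidenceSetEquivNeighborSet v)]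
  rw [Set.ncard_eq_toFinset_card', Set.toFinset_card]

lemma signlessLap_eq : signlessLapM T = incM T * (incM T)ᵀ := by
  ext u v
  simp only [Matrix.mul_apply, incM, transpose_apply, Matrix.of_apply, signlessLapM]
  by_cases h : u = v
  · subst h
    simp only [if_pos rfl]
    rw [vdeg_eq_card]
    apply Finset.sum_congr rfl
    intro e _
    by_cases hm : u ∈ (e : Sym2 V) <;> simp [hm]
  · rw [if_neg h]
    by_cases hadj : T.Adj u v
    · rw [if_pos hadj]
      rw [Finset.sum_eq_single (⟨s(u,v), hadj⟩ : T.edgeSet)]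
      · simp
      · intro e _ hne
        by_cases h1 : u ∈ (e : Sym2 V)
        · by_cases h2 : v ∈ (e : Sym2 V)
          · exact absurd (Subtype.ext ((Sym2.mem_and_mem_iff h).mp ⟨h1, h2⟩)) hne
          · simp [h2]
        · simp [h1]
      · intro hc; exact absurd (Finset.mem_univ _) hc
    · rw [if_neg hadj]
      symm
      apply Finset.sum_eq_zero
      intro e _
      by_cases h1 : u ∈ (e : Sym2 V)
      · by_cases h2 : v ∈ (e : Sym2 V)
        · exfalso
          have := (Sym2.mem_and_mem_iff h).mp ⟨h1, h2⟩
          apply hadj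
          have he := e.2
          rw [this] at he
          exact he
        · simp [h2]
      · simp [h1]

lemma adj_subdivision_eq :
    adjM (subdivision T) = Matrix.fromBlocks 0 (incM T) (incM T)ᵀ 0 := by
  ext a b
  cases a with
  | inl v => cases b with
    | inl w =>
      simp only [adjM, Matrix.of_apply, fromBlocks_apply₁₁, Matrix.zero_apply]
      rw [if_neg]
      rintro (⟨_, _, _, hc, _⟩ | ⟨_, _, hc, _, _⟩) <;> simp_all
    | inr e =>
      simp only [adjM, Matrix.of_apply, fromBlocks_apply₁₂, incM, Matrix.of_apply]
      congr 1
      simp only [subdivision, eq_iff_iff]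
      constructor
      · rintro (⟨v', e', h1, h2, h3⟩ | ⟨_, _, hc, _, _⟩)
        · cases Sum.inl.inj h1; cases Sum.inr.inj h2; exact h3
        · simp_all
      · intro h; exact Or.inl ⟨v, e, rfl, rfl, h⟩
  | inr e => cases b with
    | inl w =>
      simp only [adjM, Matrix.of_apply, fromBlocks_apply₂₁, transpose_apply, incM,
        Matrix.of_apply]
      congr 1
      simp only [subdivision, eq_iff_iff]
      constructor
      · rintro (⟨_, _, hc, _, _⟩ | ⟨v', e', h1, h2, h3⟩)
        · simp_all
        · cases Sum.inl.inj h1; cases Sum.inr.inj h2; exact h3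
      · intro h; exact Or.inr ⟨w, e, rfl, rfl, h⟩
    | inr f =>
      simp only [adjM, Matrix.of_apply, fromBlocks_apply₂₂, Matrix.zero_apply]
      rw [if_neg]
      rintro (⟨_, _, hc, _, _⟩ | ⟨_, _, _, hc, _⟩) <;> simp_all

end Inc

lemma lap_charpoly_eq {V : Type*} [Fintype V] (T : SimpleGraph V) (hT : T.IsTree) :
    (lapM T).charpoly = (signlessLapM T).charpoly := by
  have hne : Nonempty V := hT.isConnected.nonempty
  obtain ⟨v₀⟩ := hne
  set s : V → ℝ := fun v => (-1 : ℝ) ^ (T.dist v₀ v) with hs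
  have hs2 : ∀ v, s v * s v = 1 := by
    intro v; rw [hs]; simp [← pow_add, ← two_mul, pow_mul]
  have hsign : ∀ i j, T.Adj i j → s i * s j = -1 := by
    intro i j hadj
    have hkey : ∀ n : ℕ, (-1 : ℝ) ^ n * (-1 : ℝ) ^ (n + 1) = -1 := by
      intro n
      rw [← pow_add, show n + (n + 1) = 2 * n + 1 by ring, pow_add, pow_mul]
      norm_num
    rcases tree_adj_dist_succ hT v₀ hadj with hd | hd
    · show (-1 : ℝ) ^ (T.dist v₀ i) * (-1 : ℝ) ^ (T.dist v₀ j) = -1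
      rw [hd]; exact hkey _
    · show (-1 : ℝ) ^ (T.dist v₀ i) * (-1 : ℝ) ^ (T.dist v₀ j) = -1
      rw [hd, mul_comm]; exact hkey _
  have hP : Matrix.diagonal s * Matrix.diagonal s = 1 := by
    rw [Matrix.diagonal_mul_diagonal]
    ext i j
    by_cases h : i = j
    · subst h; simp [hs2]
    · simp [Matrix.diagonal_apply_ne _ h, Matrix.one_apply_ne h]
  have key : lapM T = Matrix.diagonal s * signlessLapM T * Matrix.diagonal s := by
    ext i j
    rw [Matrix.mul_diagonal, Matrix.diagonal_mul]
    simp only [lapM, signlessLapM, Matrix.of_apply]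
    by_cases h : i = j
    · subst h
      simp only [if_pos rfl]
      rw [mul_comm (s i), mul_assoc, hs2, mul_one]
      simp
    · simp only [if_neg h]
      by_cases hadj : T.Adj i j
      · simp only [if_pos hadj, mul_one]
        exact (hsign i j hadj).symm
      · simp [hadj]
  rw [key]
  exact charpoly_conj _ _ _ hP hP

lemma block_charpoly {n m : Type*} [Fintype n] [Fintype m] [DecidableEq n] [DecidableEq m]
    (B : Matrix n m ℝ) :
    (fromBlocks 0 B Bᵀ 0).charpoly * X ^ (Fintype.card n) =
      X ^ (Fintype.card m) * ((B * Bᵀ).charpoly.comp (X ^ 2)) := by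
  set R := Polynomial ℝ
  set K := FractionRing R
  set φ : R →+* K := algebraMap R K with hφ
  have hinj : Function.Injective φ := IsFractionRing.injective R K
  apply hinj
  set d : K := φ X with hd
  have hd0 : d ≠ 0 := by
    rw [hd]
    intro hc
    exact X_ne_zero (hinj (by simpa using hc))
  set ψ : ℝ →+* K := φ.comp Polynomial.C with hψ
  set B₁ : Matrix n m K := B.map ψ with hB₁
  have hdiagn : (charmatrix (0 : Matrix n n ℝ)).map φ = (d • 1 : Matrix n n K) := by
    ext i j
    by_cases h : i = j
    · subst h
      rw [Matrix.map_apply, charmatrix_apply_eq, Matrix.smul_apply, Matrix.one_apply_eq]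
      simp [hd]
    · rw [Matrix.map_apply, charmatrix_apply_ne _ _ _ h, Matrix.smul_apply,
        Matrix.one_apply_ne h]
      simp
  have hdiagm : (charmatrix (0 : Matrix m m ℝ)).map φ = (d • 1 : Matrix m m K) := by
    ext i j
    by_cases h : i = j
    · subst h
      rw [Matrix.map_apply, charmatrix_apply_eq, Matrix.smul_apply, Matrix.one_apply_eq]
      simp [hd]
    · rw [Matrix.map_apply, charmatrix_apply_ne _ _ _ h, Matrix.smul_apply,
        Matrix.one_apply_ne h]
      simp
  have hoff1 : ((-B.map C).map φ) = -(B.map ψ) := by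
    ext i j
    simp [hψ]
  have hoff2 : ((-Bᵀ.map C).map φ) = -(Bᵀ.map ψ) := by
    ext i j
    simp [hψ]
  have hcm : (charmatrix (fromBlocks (0 : Matrix n n ℝ) B Bᵀ 0)).map φ =
      fromBlocks (d • 1) (-B₁) (-B₁ᵀ) (d • 1) := by
    rw [charmatrix_fromBlocks, Matrix.fromBlocks_map, hdiagn, hdiagm, hoff1,
      hoff2, hB₁, Matrix.transpose_map]
  letI : Invertible (d • (1 : Matrix m m K)) :=
    ⟨d⁻¹ • (1 : Matrix m m K),
      by rw [smul_mul_smul_comm, one_mul, inv_mul_cancel₀ hd0, one_smul],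
      by rw [smul_mul_smul_comm, one_mul, mul_inv_cancel₀ hd0, one_smul]⟩
  have hdet : ((charmatrix (fromBlocks (0 : Matrix n n ℝ) B Bᵀ 0)).map φ).det =
      d ^ (Fintype.card m) * ((d⁻¹ : K) ^ (Fintype.card n) * ((d ^ 2) • 1 - (B * Bᵀ).map ψ).det) := by
    rw [hcm, Matrix.det_fromBlocks₂₂]
    congr 1
    · rw [Matrix.det_smul, det_one, mul_one]
    · have hinv : (⅟(d • (1 : Matrix m m K))) = d⁻¹ • (1 : Matrix m m K) := rfl
      rw [hinv]
      have h1 : (-B₁) * (d⁻¹ • (1 : Matrix m m K)) * (-B₁ᵀ) = d⁻¹ • (B₁ * B₁ᵀ) := by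
        rw [Matrix.mul_smul, Matrix.mul_one, Matrix.smul_mul, Matrix.neg_mul, Matrix.mul_neg,
          neg_neg]
      rw [h1]
      have h2 : d • (1 : Matrix n n K) - d⁻¹ • (B₁ * B₁ᵀ) = d⁻¹ • ((d ^ 2) • 1 - B₁ * B₁ᵀ) := by
        rw [smul_sub, smul_smul]
        congr 2
        rw [pow_two, ← mul_assoc, inv_mul_cancel₀ hd0]
        ring
      rw [h2, Matrix.det_smul]
      congr 2
      rw [hB₁, ← Matrix.transpose_map, ← Matrix.map_mul]
  have hcomp : ((d ^ 2) • (1 : Matrix n n K) - (B * Bᵀ).map ψ).det =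
      φ (((B * Bᵀ).charpoly).comp (X ^ 2)) := by
    set g : R →+* K := Polynomial.eval₂RingHom ψ (d ^ 2) with hg
    have hmap : (charmatrix (B * Bᵀ)).map g = (d ^ 2) • (1 : Matrix n n K) - (B * Bᵀ).map ψ := by
      ext i j
      by_cases h : i = j
      · subst h
        rw [Matrix.map_apply, charmatrix_apply_eq, Matrix.sub_apply, Matrix.smul_apply,
          Matrix.one_apply_eq, Matrix.map_apply]
        rw [show ((eval₂RingHom ψ (d ^ 2)) : R → K) = eval₂ ψ (d ^ 2) from coe_eval₂RingHom ψ (d ^ 2) ▸ rfl]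
        simp [eval₂_X, eval₂_C]
      · rw [Matrix.map_apply, charmatrix_apply_ne _ _ _ h, Matrix.sub_apply, Matrix.smul_apply,
          Matrix.one_apply_ne h, Matrix.map_apply]
        rw [show ((eval₂RingHom ψ (d ^ 2)) : R → K) = eval₂ ψ (d ^ 2) from coe_eval₂RingHom ψ (d ^ 2) ▸ rfl]
        simp [eval₂_X, eval₂_C]
    rw [← hmap, ← RingHom.mapMatrix_apply, ← RingHom.map_det]
    show g (Matrix.charpoly _) = _
    rw [Polynomial.comp, Polynomial.hom_eval₂]
    simp only [map_pow]
    rfl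
  rw [_root_.map_mul φ, _root_.map_mul φ, map_pow, map_pow]
  have hφcp : φ ((fromBlocks (0 : Matrix n n ℝ) B Bᵀ 0).charpoly) =
      ((charmatrix (fromBlocks (0 : Matrix n n ℝ) B Bᵀ 0)).map φ).det := by
    rw [Matrix.charpoly, RingHom.map_det, RingHom.mapMatrix_apply]
  rw [hφcp, hdet, hcomp, ← hd]
  have hcancel : (d⁻¹ : K) ^ (Fintype.card n) * d ^ (Fintype.card n) = 1 := by
    rw [← mul_pow, inv_mul_cancel₀ hd0, one_pow]
  calc d ^ Fintype.card m * (d⁻¹ ^ Fintype.card n * φ ((B * Bᵀ).charpoly.comp (X ^ 2))) *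
        d ^ Fintype.card n
      = d ^ Fintype.card m * φ ((B * Bᵀ).charpoly.comp (X ^ 2)) *
        (d⁻¹ ^ Fintype.card n * d ^ Fintype.card n) := by ring
    _ = d ^ Fintype.card m * φ ((B * Bᵀ).charpoly.comp (X ^ 2)) := by rw [hcancel, mul_one]


lemma sum_sqrt_eig_signless {V : Type*} [Fintype V] (T : SimpleGraph V) :
    IE T = ((signlessLapM T).charpoly.roots.map Real.sqrt).sum :=
  sum_eigen _ (signlessLapM_isHermitian T) Real.sqrt

/-- Lemma 4.1: for any tree `T` of order `n`,
`IE(T) = LEL(T) = (1/2)·E(S(T))`. -/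
theorem IE_eq_LEL_eq_half_energy_subdivision {V : Type*} [Fintype V]
    (T : SimpleGraph V) (hT : T.IsTree) :
    IE T = LEL T ∧ LEL T = (1 / 2) * energy (subdivision T) := by
  have hIE : IE T = ((signlessLapM T).charpoly.roots.map Real.sqrt).sum :=
    sum_eigen _ (signlessLapM_isHermitian T) Real.sqrt
  have hLEL : LEL T = ((lapM T).charpoly.roots.map Real.sqrt).sum :=
    sum_eigen _ (lapM_isHermitian T) Real.sqrt
  have h1 : IE T = LEL T := by
    rw [hIE, hLEL, lap_charpoly_eq T hT]
  refine ⟨h1, ?_⟩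
  -- now energy of subdivision
  set μ : V → ℝ := (signlessLapM_isHermitian T).eigenvalues with hμ
  have hμ0 : ∀ i, 0 ≤ μ i := by
    intro i
    apply Matrix.PosSemidef.eigenvalues_nonneg
    rw [signlessLap_eq]
    have : (incM T)ᵀ = (incM T)ᴴ := by
      ext i j; simp [Matrix.conjTranspose_apply]
    rw [this]
    exact Matrix.posSemidef_self_mul_conjTranspose _
  have hQcp : (signlessLapM T).charpoly = ∏ i, (X - C (μ i)) :=
    charpoly_hermitian _ (signlessLapM_isHermitian T)
  have hIEμ : IE T = ∑ i, Real.sqrt (μ i) := rfl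
  -- energy
  have hE : energy (subdivision T) =
      (((adjM (subdivision T)).charpoly).roots.map (fun x => |x|)).sum :=
    sum_eigen _ (adjM_isHermitian (subdivision T)) _
  -- the polynomial identity
  have hb := block_charpoly (incM T)
  rw [← signlessLap_eq, ← adj_subdivision_eq] at hb
  have hcompprod : ((signlessLapM T).charpoly).comp (X ^ 2) =
      (∏ i, (X - C (Real.sqrt (μ i)))) * (∏ i, (X - C (-Real.sqrt (μ i)))) := by
    rw [hQcp]
    rw [Polynomial.prod_comp]
    rw [← Finset.prod_mul_distrib]
    apply Finset.prod_congr rfl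
    intro i _
    rw [Polynomial.sub_comp, Polynomial.X_comp, Polynomial.C_comp]
    have : (X - C (Real.sqrt (μ i))) * (X - C (-Real.sqrt (μ i)))
        = X ^ 2 - C (Real.sqrt (μ i) * Real.sqrt (μ i)) := by
      rw [map_neg, C_mul]
      ring
    rw [this, Real.mul_self_sqrt (hμ0 i)]
  rw [hcompprod] at hb
  -- roots computation
  have hP1 : (adjM (subdivision T)).charpoly ≠ 0 := (Matrix.charpoly_monic _).ne_zero
  have hXn : (X : ℝ[X]) ^ (Fintype.card V) ≠ 0 := pow_ne_zero _ X_ne_zero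
  have hXm : (X : ℝ[X]) ^ (Fintype.card T.edgeSet) ≠ 0 := pow_ne_zero _ X_ne_zero
  have hprod1 : (∏ i, (X - C (Real.sqrt (μ i)))) ≠ 0 := by
    apply Finset.prod_ne_zero_iff.mpr
    intro i _
    exact X_sub_C_ne_zero _
  have hprod2 : (∏ i, (X - C (-Real.sqrt (μ i)))) ≠ 0 := by
    apply Finset.prod_ne_zero_iff.mpr
    intro i _
    exact X_sub_C_ne_zero _
  have hroots : ((adjM (subdivision T)).charpoly).roots + (Multiset.replicate (Fintype.card V) 0) =
      (Multiset.replicate (Fintype.card T.edgeSet) 0)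
        + (Finset.univ.val.map fun i => Real.sqrt (μ i))
        + (Finset.univ.val.map fun i => -Real.sqrt (μ i)) := by
    have := congr_arg Polynomial.roots hb
    rw [Polynomial.roots_mul (mul_ne_zero hP1 hXn),
      Polynomial.roots_mul (mul_ne_zero hXm (mul_ne_zero hprod1 hprod2)),
      Polynomial.roots_mul (mul_ne_zero hprod1 hprod2),
      Polynomial.roots_pow, Polynomial.roots_X,
      show (∏ i, (X - C (Real.sqrt (μ i)))) = ((Finset.univ.val.map fun i => Real.sqrt (μ i)).map
        fun a => X - C a).prod by rw [Multiset.map_map]; rfl,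
      show (∏ i, (X - C (-Real.sqrt (μ i)))) = ((Finset.univ.val.map fun i => -Real.sqrt (μ i)).map
        fun a => X - C a).prod by rw [Multiset.map_map]; rfl,
      Polynomial.roots_multiset_prod_X_sub_C, Polynomial.roots_multiset_prod_X_sub_C] at this
    rw [Polynomial.roots_pow, Polynomial.roots_X, Multiset.nsmul_singleton,
      Multiset.nsmul_singleton, ← add_assoc] at this
    exact this
  -- now sum of abs over roots
  have habs : ((((adjM (subdivision T)).charpoly).roots
        + (Multiset.replicate (Fintype.card V) 0)).map (fun x => |x|)).sum =
      (((Multiset.replicate (Fintype.card T.edgeSet) 0)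
        + (Finset.univ.val.map fun i => Real.sqrt (μ i))
        + (Finset.univ.val.map fun i => -Real.sqrt (μ i))).map (fun x => |x|)).sum := by
    rw [hroots]
  rw [Multiset.map_add, Multiset.sum_add, Multiset.map_add, Multiset.map_add, Multiset.sum_add,
    Multiset.sum_add] at habs
  have hz1 : ((Multiset.replicate (Fintype.card V) (0:ℝ)).map (fun x => |x|)).sum = 0 := by
    simp [Multiset.map_replicate]
  have hz2 : ((Multiset.replicate (Fintype.card T.edgeSet) (0:ℝ)).map (fun x => |x|)).sum = 0 := by
    simp [Multiset.map_replicate]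
  rw [hz1, hz2, add_zero, zero_add] at habs
  have hs1 : ((Finset.univ.val.map fun i : V => Real.sqrt (μ i)).map (fun x => |x|)).sum
      = ∑ i, Real.sqrt (μ i) := by
    rw [Multiset.map_map]
    have : ((fun x => |x|) ∘ fun i : V => Real.sqrt (μ i)) = fun i : V => Real.sqrt (μ i) := by
      ext i; exact abs_of_nonneg (Real.sqrt_nonneg _)
    rw [this]
    rfl
  have hs2 : ((Finset.univ.val.map fun i : V => -Real.sqrt (μ i)).map (fun x => |x|)).sum
      = ∑ i, Real.sqrt (μ i) := by
    rw [Multiset.map_map]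
    have : ((fun x => |x|) ∘ fun i : V => -Real.sqrt (μ i)) = fun i : V => Real.sqrt (μ i) := by
      ext i; rw [Function.comp_apply, abs_neg]; exact abs_of_nonneg (Real.sqrt_nonneg _)
    rw [this]
    rfl
  rw [hs1, hs2] at habs
  rw [← h1, hIEμ]
  rw [hE, habs]
  ring
end
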